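/- Suppose integers a, b ≥ 0 with a + b = 8, s ∈ ℤ, and 2×2 integer matrices M, N of determinant 1 satisfy M·M(1)·N = [[-s,-1],[s+1,1]] and N·M(1)·M·M(1)·M(2)^a·M(s+5)·M(2)^b·M(1) = I, where M(k) = [[0,-1],[1,k]]. Writing M = [[x,y],[z,w]], if (a,b,s) = (0,8,2) then 55z² - 95zw + 41w² + 1 = 0. -/

import Mathlib

/-- The matrix associated to a curve of self-intersection `-k`. -/
def chainMat (k : ℤ) : Matrix (Fin 2) (Fin 2) ℤ := !![0, -1; 1, k]

/-- In Case I of the smooth case, with `(a,b,s) = (0,8,2)`, the entries `z, w`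
of the chain matrix `M = [[x,y],[z,w]]` satisfy the Pell-type relation
`55z² - 95zw + 41w² + 1 = 0`. -/
theorem case_I_smooth_pell (a b : ℕ) (s x y z w : ℤ)
    (N : Matrix (Fin 2) (Fin 2) ℤ)
    (hab : a + b = 8)
    (hM : (!![x, y; z, w] : Matrix (Fin 2) (Fin 2) ℤ).det = 1)
    (hN : N.det = 1)
    (h1 : !![x, y; z, w] * chainMat 1 * N = !![-s, -1; s + 1, 1])
    (h2 : N * chainMat 1 * !![x, y; z, w] * chainMat 1 * chainMat 2 ^ a *
        chainMat (s + 5) * chainMat 2 ^ b * chainMat 1 = 1)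
    (hcase : a = 0 ∧ b = 8 ∧ s = 2) :
    55 * z ^ 2 - 95 * z * w + 41 * w ^ 2 + 1 = 0 := by
  obtain ⟨ha, hb, hs⟩ := hcase
  subst ha hb hs
  set M : Matrix (Fin 2) (Fin 2) ℤ := !![x, y; z, w] with hMdef
  have h2' : N * (chainMat 1 * M * chainMat 1 * chainMat (2 + 5) *
      chainMat 2 ^ 8 * chainMat 1) = 1 := by
    calc N * (chainMat 1 * M * chainMat 1 * chainMat (2 + 5) *
        chainMat 2 ^ 8 * chainMat 1)
        = N * chainMat 1 * M * chainMat 1 * chainMat 2 ^ 0 *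
          chainMat (2 + 5) * chainMat 2 ^ 8 * chainMat 1 := by
          simp [mul_assoc]
      _ = 1 := h2
  have key : M * chainMat 1 =
      !![-(2:ℤ), -1; 2 + 1, 1] *
        (chainMat 1 * M * chainMat 1 * chainMat (2 + 5) *
          chainMat 2 ^ 8 * chainMat 1) := by
    calc M * chainMat 1
        = M * chainMat 1 * (N * (chainMat 1 * M * chainMat 1 *
            chainMat (2 + 5) * chainMat 2 ^ 8 * chainMat 1)) := by
          rw [h2', mul_one]
      _ = (M * chainMat 1 * N) * (chainMat 1 * M * chainMat 1 *
            chainMat (2 + 5) * chainMat 2 ^ 8 * chainMat 1) := by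
          simp only [mul_assoc]
      _ = _ := by rw [h1]
  have hdet : x * w - y * z = 1 := by
    simpa [hMdef, Matrix.det_fin_two_of] using hM
  rw [hMdef] at key
  simp only [chainMat, pow_succ, pow_zero, one_mul, Matrix.mul_fin_two] at key
  norm_num at key
  have e01 := key.1.2
  have e11 := key.2.2
  linear_combination (-1 : ℤ) * hdet + (5 * w - 6 * z) * e01 + (6 * w - 7 * z) * e11
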